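/- Let Ω = Ω₁ × ⋯ × Ω_m ⊂ ℝⁿ be a finite product of bounded domains, each with Lipschitz boundary. Then Ω is a bounded domain with Lipschitz boundary. -/

import Mathlib

open Metric Bornology

noncomputable section

/-- A bounded domain in a Euclidean space has Lipschitz boundary if near each boundary point,
after choosing a unit direction `ν`, the domain is the strict subgraph of a Lipschitz function
over the hyperplane orthogonal to `ν`. -/
def HasLipschitzBoundaryR {k : ℕ} (Ω : Set (EuclideanSpace ℝ (Fin k))) : Prop :=
  ∀ p ∈ frontier Ω, ∃ ν : EuclideanSpace ℝ (Fin k), ‖ν‖ = 1 ∧ ∃ ε > 0,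
    ∃ (L : NNReal) (ψ : EuclideanSpace ℝ (Fin k) → ℝ), LipschitzWith L ψ ∧
      ∀ x ∈ ball p ε, (x ∈ Ω ↔ (inner ℝ x ν : ℝ) < ψ (x - (inner ℝ x ν : ℝ) • ν))

namespace Statement14Aux

open Finset

variable {m N : ℕ} (d : Fin m → ℕ) (e : (Σ i, Fin (d i)) ≃ Fin N)

/-- Extraction of the `i`-th block of coordinates. -/
def B (i : Fin m) (x : EuclideanSpace ℝ (Fin N)) : EuclideanSpace ℝ (Fin (d i)) :=
  WithLp.toLp 2 (fun k => x (e ⟨i, k⟩))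

lemma B_sub_smul (i : Fin m) (x y : EuclideanSpace ℝ (Fin N)) (c : ℝ) :
    B d e i (x - c • y) = B d e i x - c • B d e i y := rfl

lemma B_smul (i : Fin m) (c : ℝ) (x : EuclideanSpace ℝ (Fin N)) :
    B d e i (c • x) = c • B d e i x := rfl

lemma B_add (i : Fin m) (x y : EuclideanSpace ℝ (Fin N)) :
    B d e i (x + y) = B d e i x + B d e i y := rfl

lemma B_sum {ι : Type*} (i : Fin m) (s : Finset ι) (f : ι → EuclideanSpace ℝ (Fin N)) :
    B d e i (∑ j ∈ s, f j) = ∑ j ∈ s, B d e i (f j) := by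
  classical
  induction s using Finset.cons_induction with
  | empty => rfl
  | cons a s ha ih => rw [Finset.sum_cons, Finset.sum_cons, B_add, ih]

lemma dist_B_le (i : Fin m) (x y : EuclideanSpace ℝ (Fin N)) :
    dist (B d e i x) (B d e i y) ≤ dist x y := by
  rw [EuclideanSpace.dist_eq, EuclideanSpace.dist_eq]
  apply Real.sqrt_le_sqrt
  calc ∑ k, dist (B d e i x k) (B d e i y k) ^ 2
      = ∑ n ∈ (univ : Finset (Fin (d i))).image (fun k => e ⟨i, k⟩), dist (x n) (y n) ^ 2 := by
        rw [Finset.sum_image (fun a _ b _ h => sigma_mk_injective (e.injective h))]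
        rfl
    _ ≤ ∑ n, dist (x n) (y n) ^ 2 :=
        Finset.sum_le_sum_of_subset_of_nonneg (subset_univ _) (fun _ _ _ => sq_nonneg _)

lemma lipschitzWith_B (i : Fin m) : LipschitzWith 1 (B d e i) :=
  LipschitzWith.of_dist_le_mul (fun x y => by simpa using dist_B_le d e i x y)

lemma sum_normsq (x : EuclideanSpace ℝ (Fin N)) :
    ∑ i, ‖B d e i x‖ ^ 2 = ‖x‖ ^ 2 := by
  have h1 : ∀ i, ‖B d e i x‖ ^ 2 = ∑ k, ‖x (e ⟨i, k⟩)‖ ^ 2 := by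
    intro i
    rw [EuclideanSpace.norm_eq, Real.sq_sqrt (by positivity)]
    rfl
  rw [EuclideanSpace.norm_eq, Real.sq_sqrt (by positivity)]
  have h2 : ∑ n, ‖x n‖ ^ 2 = ∑ σ : Σ i, Fin (d i), ‖x (e σ)‖ ^ 2 :=
    (Fintype.sum_equiv e (fun σ => ‖x (e σ)‖ ^ 2) (fun n => ‖x n‖ ^ 2) (fun σ => rfl)).symm
  rw [h2, ← Finset.univ_sigma_univ, Finset.sum_sigma]
  simp only [h1]

/-- Embedding of the `i`-th block. -/
def lift (i : Fin m) (v : EuclideanSpace ℝ (Fin (d i))) : EuclideanSpace ℝ (Fin N) :=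
  ∑ k, EuclideanSpace.single (e ⟨i, k⟩) (v k)

lemma piLp_sum_apply {ι κ : Type*} [Fintype κ] (s : Finset ι)
    (f : ι → EuclideanSpace ℝ κ) (n : κ) :
    (∑ j ∈ s, f j) n = ∑ j ∈ s, f j n :=
  by rw [WithLp.ofLp_sum, Finset.sum_apply]

lemma lift_apply (i : Fin m) (v : EuclideanSpace ℝ (Fin (d i))) (n : Fin N) :
    lift d e i v n = ∑ k, if n = e ⟨i, k⟩ then v k else 0 := by
  classical
  unfold lift
  rw [piLp_sum_apply]
  exact Finset.sum_congr rfl fun k _ => EuclideanSpace.single_apply _ _ _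

lemma B_lift_same (i : Fin m) (v : EuclideanSpace ℝ (Fin (d i))) :
    B d e i (lift d e i v) = v := by
  classical
  ext k'
  show lift d e i v (e ⟨i, k'⟩) = v k'
  rw [lift_apply]
  simp [e.injective.eq_iff, Sigma.mk.inj_iff]

lemma B_lift_ne (i j : Fin m) (h : j ≠ i) (v : EuclideanSpace ℝ (Fin (d i))) :
    B d e j (lift d e i v) = 0 := by
  classical
  ext k'
  show lift d e i v (e ⟨j, k'⟩) = 0
  rw [lift_apply]
  simp [e.injective.eq_iff, Sigma.mk.inj_iff, h]

lemma inner_lift (i : Fin m) (v : EuclideanSpace ℝ (Fin (d i))) (x : EuclideanSpace ℝ (Fin N)) :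
    (inner ℝ x (lift d e i v) : ℝ) = (inner ℝ (B d e i x) v : ℝ) := by
  unfold lift
  rw [inner_sum]
  rw [Finset.sum_congr rfl (fun k _ => EuclideanSpace.inner_single_right (𝕜 := ℝ) _ _ _)]
  rw [PiLp.inner_apply]
  exact Finset.sum_congr rfl fun k _ => by
    simp [B, RCLike.inner_apply, mul_comm]

lemma hfun_sub {k : ℕ} (ν : EuclideanSpace ℝ (Fin k)) (hν : ‖ν‖ = 1)
    (ψ : EuclideanSpace ℝ (Fin k) → ℝ) (y : EuclideanSpace ℝ (Fin k)) (s : ℝ) :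
    (inner ℝ (y - s • ν) ν : ℝ) - ψ ((y - s • ν) - (inner ℝ (y - s • ν) ν : ℝ) • ν)
      = ((inner ℝ y ν : ℝ) - ψ (y - (inner ℝ y ν : ℝ) • ν)) - s := by
  have h1 : (inner ℝ (y - s • ν) ν : ℝ) = (inner ℝ y ν : ℝ) - s := by
    rw [inner_sub_left, real_inner_smul_left, real_inner_self_eq_norm_mul_norm, hν]
    ring
  rw [h1]
  have h2 : (y - s • ν) - ((inner ℝ y ν : ℝ) - s) • ν = y - (inner ℝ y ν : ℝ) • ν := by
    rw [sub_smul]; abel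
  rw [h2]
  ring

lemma lipschitz_hfun {k : ℕ} (ν : EuclideanSpace ℝ (Fin k)) (hν : ‖ν‖ ≤ 1) (L : NNReal)
    (ψ : EuclideanSpace ℝ (Fin k) → ℝ) (hψ : LipschitzWith L ψ) :
    LipschitzWith (1 + 2 * L)
      (fun y : EuclideanSpace ℝ (Fin k) => (inner ℝ y ν : ℝ) - ψ (y - (inner ℝ y ν : ℝ) • ν)) := by
  apply LipschitzWith.of_dist_le_mul
  intro y z
  have hin : |(inner ℝ y ν : ℝ) - (inner ℝ z ν : ℝ)| ≤ dist y z := by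
    rw [← inner_sub_left]
    calc |(inner ℝ (y - z) ν : ℝ)| ≤ ‖y - z‖ * ‖ν‖ := abs_real_inner_le_norm _ _
      _ ≤ ‖y - z‖ * 1 := by
          have : (0:ℝ) ≤ ‖y - z‖ := norm_nonneg _
          nlinarith
      _ = dist y z := by rw [mul_one, dist_eq_norm]
  have harg : ‖(y - (inner ℝ y ν : ℝ) • ν) - (z - (inner ℝ z ν : ℝ) • ν)‖ ≤ 2 * dist y z := by
    have hrw : (y - (inner ℝ y ν : ℝ) • ν) - (z - (inner ℝ z ν : ℝ) • ν)
        = (y - z) - ((inner ℝ y ν : ℝ) - (inner ℝ z ν : ℝ)) • ν := by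
      rw [sub_smul]; abel
    rw [hrw]
    calc ‖(y - z) - ((inner ℝ y ν : ℝ) - (inner ℝ z ν : ℝ)) • ν‖
        ≤ ‖y - z‖ + ‖((inner ℝ y ν : ℝ) - (inner ℝ z ν : ℝ)) • ν‖ := norm_sub_le _ _
      _ ≤ ‖y - z‖ + |(inner ℝ y ν : ℝ) - (inner ℝ z ν : ℝ)| * ‖ν‖ := by
          rw [norm_smul, Real.norm_eq_abs]
      _ ≤ dist y z + dist y z * 1 := by
          rw [← dist_eq_norm]
          have h1 : |(inner ℝ y ν : ℝ) - (inner ℝ z ν : ℝ)| * ‖ν‖ ≤ dist y z * 1 :=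
            mul_le_mul hin hν (norm_nonneg _) dist_nonneg
          linarith
      _ = 2 * dist y z := by ring
  have hψd : |ψ (y - (inner ℝ y ν : ℝ) • ν) - ψ (z - (inner ℝ z ν : ℝ) • ν)|
      ≤ (L : ℝ) * (2 * dist y z) := by
    have hh := hψ.dist_le_mul (y - (inner ℝ y ν : ℝ) • ν) (z - (inner ℝ z ν : ℝ) • ν)
    rw [Real.dist_eq, dist_eq_norm] at hh
    exact hh.trans (mul_le_mul_of_nonneg_left harg L.coe_nonneg)
  rw [Real.dist_eq]
  have hcoe : ((1 + 2 * L : NNReal) : ℝ) = 1 + 2 * (L : ℝ) := by push_cast; ring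
  rw [hcoe]
  calc |((inner ℝ y ν : ℝ) - ψ (y - (inner ℝ y ν : ℝ) • ν))
        - ((inner ℝ z ν : ℝ) - ψ (z - (inner ℝ z ν : ℝ) • ν))|
      = |((inner ℝ y ν : ℝ) - (inner ℝ z ν : ℝ))
        - (ψ (y - (inner ℝ y ν : ℝ) • ν) - ψ (z - (inner ℝ z ν : ℝ) • ν))| := by
        ring_nf
    _ ≤ |(inner ℝ y ν : ℝ) - (inner ℝ z ν : ℝ)|
        + |ψ (y - (inner ℝ y ν : ℝ) • ν) - ψ (z - (inner ℝ z ν : ℝ) • ν)| := abs_sub _ _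
    _ ≤ (1 + 2 * (L : ℝ)) * dist y z := by nlinarith [dist_nonneg (x := y) (y := z)]

lemma lipschitzWith_sup' {ι α : Type*} [PseudoMetricSpace α] {s : Finset ι} (hs : s.Nonempty)
    {C : NNReal} {f : ι → α → ℝ} (hf : ∀ i ∈ s, LipschitzWith C (f i)) :
    LipschitzWith C (fun x => s.sup' hs (fun i => f i x)) := by
  apply LipschitzWith.of_dist_le_mul
  intro x y
  rw [Real.dist_eq, abs_sub_le_iff]
  have key : ∀ i ∈ s, |f i x - f i y| ≤ (C : ℝ) * dist x y := by
    intro i hi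
    have hh := (hf i hi).dist_le_mul x y
    rwa [Real.dist_eq] at hh
  constructor
  · rw [sub_le_iff_le_add]
    apply Finset.sup'_le
    intro i hi
    have h1 : f i x - f i y ≤ (C : ℝ) * dist x y := (le_abs_self _).trans (key i hi)
    have h2 : f i y ≤ s.sup' hs (fun j => f j y) := Finset.le_sup' (fun j => f j y) hi
    linarith
  · rw [sub_le_iff_le_add]
    apply Finset.sup'_le
    intro i hi
    have h1 : f i y - f i x ≤ (C : ℝ) * dist x y := by
      have hh := key i hi
      rw [abs_sub_comm] at hh
      exact (le_abs_self _).trans hh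
    have h2 : f i x ≤ s.sup' hs (fun j => f j x) := Finset.le_sup' (fun j => f j x) hi
    linarith

def Φ : EuclideanSpace ℝ (Fin N) ≃ₜ ∀ i, EuclideanSpace ℝ (Fin (d i)) where
  toFun := fun x i => WithLp.toLp 2 (fun k => x (e ⟨i, k⟩))
  invFun := fun y => WithLp.toLp 2 (fun n => y (e.symm n).1 (e.symm n).2)
  left_inv := fun x => PiLp.ext fun n => by
    show x (e ⟨(e.symm n).1, (e.symm n).2⟩) = x n
    rw [Sigma.eta, e.apply_symm_apply]
  right_inv := fun y => funext fun i => PiLp.ext fun k => by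
    show y (e.symm (e ⟨i, k⟩)).1 (e.symm (e ⟨i, k⟩)).2 = y i k
    rw [e.symm_apply_apply]
  continuous_toFun := continuous_pi fun i => (PiLp.continuous_toLp 2 _).comp
    (continuous_pi fun k => PiLp.continuous_apply 2 _ _)
  continuous_invFun := (PiLp.continuous_toLp 2 _).comp (continuous_pi fun n =>
    (PiLp.continuous_apply 2 _ (e.symm n).2).comp (continuous_apply (e.symm n).1))

end Statement14Aux

open Statement14Aux Finset in
set_option maxHeartbeats 2000000 in
theorem statement14 {m N : ℕ} (d : Fin m → ℕ) (e : (Σ i, Fin (d i)) ≃ Fin N)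
    (Ωi : ∀ i, Set (EuclideanSpace ℝ (Fin (d i))))
    (hopen : ∀ i, IsOpen (Ωi i)) (hconn : ∀ i, IsConnected (Ωi i))
    (hbdd : ∀ i, IsBounded (Ωi i)) (hlip : ∀ i, HasLipschitzBoundaryR (Ωi i))
    (Ω : Set (EuclideanSpace ℝ (Fin N)))
    (hΩ : Ω = {x : EuclideanSpace ℝ (Fin N) |
      ∀ i, (WithLp.toLp 2 (fun k => x (e ⟨i, k⟩)) : EuclideanSpace ℝ (Fin (d i))) ∈ Ωi i}) :
    IsOpen Ω ∧ IsConnected Ω ∧ IsBounded Ω ∧ HasLipschitzBoundaryR Ω := by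
  classical
  have hΩ' : Ω = ⋂ i, (B d e i) ⁻¹' (Ωi i) := by
    rw [hΩ]; ext x; simp [B, Set.mem_iInter]
  -- openness
  have hopenΩ : IsOpen Ω := by
    rw [hΩ']
    exact isOpen_iInter_of_finite fun i => (hopen i).preimage (lipschitzWith_B d e i).continuous
  refine ⟨hopenΩ, ?_, ?_, ?_⟩
  · -- connectedness
    have hset : Ω = (Φ d e) ⁻¹' (Set.univ.pi Ωi) := by
      rw [hΩ]; ext x; simp [Φ, Set.mem_univ_pi]
    rw [hset, ← Homeomorph.image_symm]
    exact (isConnected_univ_pi.mpr hconn).image _ (Φ d e).symm.continuous.continuousOn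
  · -- boundedness
    choose R hR using fun i => isBounded_iff_forall_norm_le.mp (hbdd i)
    apply isBounded_iff_forall_norm_le.mpr
    refine ⟨Real.sqrt (∑ i, max (R i) 0 ^ 2), fun x hx => ?_⟩
    have hmem : ∀ i, B d e i x ∈ Ωi i := by
      rw [hΩ'] at hx
      simpa [Set.mem_iInter] using hx
    have h1 : ‖x‖ ^ 2 ≤ ∑ i, max (R i) 0 ^ 2 := by
      rw [← sum_normsq d e x]
      apply Finset.sum_le_sum
      intro i _
      have h2 : ‖B d e i x‖ ≤ max (R i) 0 := (hR i _ (hmem i)).trans (le_max_left _ _)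
      exact pow_le_pow_left₀ (norm_nonneg _) h2 2
    calc ‖x‖ = Real.sqrt (‖x‖ ^ 2) := (Real.sqrt_sq (norm_nonneg _)).symm
      _ ≤ Real.sqrt (∑ i, max (R i) 0 ^ 2) := Real.sqrt_le_sqrt h1
  · -- Lipschitz boundary
    intro p hp
    rw [hopenΩ.frontier_eq, Set.mem_diff] at hp
    obtain ⟨hp1, hp2⟩ := hp
    have hpc : ∀ i, B d e i p ∈ closure (Ωi i) := by
      intro i
      have hsub : Ω ⊆ (B d e i) ⁻¹' closure (Ωi i) := by
        rw [hΩ']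
        exact fun x hx => subset_closure (by simpa [Set.mem_iInter] using Set.mem_iInter.mp hx i)
      have hcl : IsClosed ((B d e i) ⁻¹' closure (Ωi i)) :=
        isClosed_closure.preimage (lipschitzWith_B d e i).continuous
      exact (hcl.closure_subset_iff.mpr hsub) hp1
    -- local data for each factor
    have H : ∀ i : Fin m, ∃ (ν : EuclideanSpace ℝ (Fin (d i))) (ε : ℝ) (L : NNReal)
        (ψ : EuclideanSpace ℝ (Fin (d i)) → ℝ),
        0 < ε ∧ LipschitzWith L ψ ∧
        (B d e i p ∈ Ωi i → ball (B d e i p) ε ⊆ Ωi i) ∧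
        (B d e i p ∉ Ωi i → ‖ν‖ = 1 ∧ ∀ y ∈ ball (B d e i p) ε,
          (y ∈ Ωi i ↔ (inner ℝ y ν : ℝ) < ψ (y - (inner ℝ y ν : ℝ) • ν))) := by
      intro i
      by_cases hi : B d e i p ∈ Ωi i
      · obtain ⟨δ, hδ, hball⟩ := Metric.isOpen_iff.mp (hopen i) _ hi
        exact ⟨0, δ, 0, fun _ => 0, hδ, LipschitzWith.const' 0, fun _ => hball,
          fun h => absurd hi h⟩
      · have hfr : B d e i p ∈ frontier (Ωi i) := by
          rw [(hopen i).frontier_eq, Set.mem_diff]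
          exact ⟨hpc i, hi⟩
        obtain ⟨ν, hν, ε, hε, L, ψ, hψ, hiff⟩ := hlip i _ hfr
        exact ⟨ν, ε, L, ψ, hε, hψ, fun h => absurd h hi, fun _ => ⟨hν, hiff⟩⟩
    choose ν' ε' L' ψ' hε' hψ' hball' hfr' using H
    set S : Finset (Fin m) := univ.filter (fun i => B d e i p ∉ Ωi i) with hSdef
    have hS : S.Nonempty := by
      by_contra h
      rw [Finset.not_nonempty_iff_eq_empty, Finset.filter_eq_empty_iff] at h
      apply hp2
      rw [hΩ]
      intro i
      exact not_not.mp (h (mem_univ i))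
    have hmemS : ∀ i, i ∈ S ↔ B d e i p ∉ Ωi i := by
      intro i; simp [hSdef]
    have hnorm1 : ∀ i ∈ S, ‖ν' i‖ = 1 := fun i hi => (hfr' i ((hmemS i).mp hi)).1
    obtain ⟨i₀, hi₀⟩ := hS
    have hne : (univ : Finset (Fin m)).Nonempty := ⟨i₀, mem_univ i₀⟩
    set c : ℝ := Real.sqrt (S.card : ℝ) with hcdef
    have hcard : 0 < (S.card : ℝ) := by
      have := Finset.card_pos.mpr ⟨i₀, hi₀⟩
      exact_mod_cast this
    have hc : 0 < c := Real.sqrt_pos.mpr hcard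
    have hcc : c * c = (S.card : ℝ) := Real.mul_self_sqrt hcard.le
    set ν : EuclideanSpace ℝ (Fin N) := c⁻¹ • ∑ i ∈ S, lift d e i (ν' i) with hνdef
    have hBν : ∀ i ∈ S, B d e i ν = c⁻¹ • ν' i := by
      intro i hi
      rw [hνdef, B_smul, B_sum]
      congr 1
      rw [Finset.sum_eq_single_of_mem i hi
        (fun j _ hj => B_lift_ne d e j i hj.symm (ν' j))]
      exact B_lift_same d e i (ν' i)
    have hinner : ∀ x : EuclideanSpace ℝ (Fin N),
        (inner ℝ x ν : ℝ) = c⁻¹ * ∑ i ∈ S, (inner ℝ (B d e i x) (ν' i) : ℝ) := by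
      intro x
      rw [hνdef, real_inner_smul_right, inner_sum]
      congr 1
      exact Finset.sum_congr rfl fun i _ => inner_lift d e i (ν' i) x
    -- ν is a unit vector
    have hν1 : ‖ν‖ = 1 := by
      have hself : (inner ℝ ν ν : ℝ) = 1 := by
        rw [hinner ν]
        have hterm : ∀ i ∈ S, (inner ℝ (B d e i ν) (ν' i) : ℝ) = c⁻¹ := by
          intro i hi
          rw [hBν i hi, real_inner_smul_left, real_inner_self_eq_norm_mul_norm, hnorm1 i hi]
          ring
        rw [Finset.sum_congr rfl hterm, Finset.sum_const, nsmul_eq_mul, ← hcc]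
        calc c⁻¹ * ((c * c) * c⁻¹) = (c⁻¹ * c) * (c * c⁻¹) := by ring
          _ = 1 := by rw [inv_mul_cancel₀ hc.ne', mul_inv_cancel₀ hc.ne', mul_one]
      have := real_inner_self_eq_norm_mul_norm ν
      rw [hself] at this
      rcases mul_self_eq_one_iff.mp this.symm with h | h
      · exact h
      · nlinarith [norm_nonneg ν]
    -- radius
    set ε : ℝ := univ.inf' hne ε' with hεdef
    have hεpos : 0 < ε := (Finset.lt_inf'_iff hne).mpr fun i _ => hε' i
    -- the Lipschitz function
    set Cmax : NNReal := univ.sup (fun i => 1 + 2 * L' i) with hCdef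
    set F : Fin m → EuclideanSpace ℝ (Fin N) → ℝ := fun i x =>
      (inner ℝ (B d e i x) (ν' i) : ℝ)
        - ψ' i (B d e i x - (inner ℝ (B d e i x) (ν' i) : ℝ) • ν' i) with hFdef
    set g : EuclideanSpace ℝ (Fin N) → ℝ := fun x => S.sup' ⟨i₀, hi₀⟩ (fun i => F i x) with hgdef
    set ψ : EuclideanSpace ℝ (Fin N) → ℝ := fun y => -(c * g y) with hψdef
    have hgLip : LipschitzWith Cmax g := by
      apply lipschitzWith_sup' ⟨i₀, hi₀⟩
      intro i hi
      have h1 : LipschitzWith ((1 + 2 * L' i) * 1) (F i) := by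
        exact (lipschitz_hfun (ν' i) (by rw [hnorm1 i hi]) (L' i) (ψ' i) (hψ' i)).comp
          (lipschitzWith_B d e i)
      exact h1.weaken (by
        rw [mul_one, hCdef]
        exact Finset.le_sup (f := fun i => 1 + 2 * L' i) (mem_univ i))
    have hψLip : LipschitzWith (Real.toNNReal c * Cmax) ψ := by
      apply LipschitzWith.of_dist_le_mul
      intro a b
      have hg := hgLip.dist_le_mul a b
      rw [Real.dist_eq] at hg
      rw [Real.dist_eq]
      have h1 : |ψ a - ψ b| = c * |g a - g b| := by
        rw [hψdef]
        have h2 : -(c * g a) - -(c * g b) = c * (g b - g a) := by ring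
        rw [h2, abs_mul, abs_of_pos hc, abs_sub_comm]
      rw [h1]
      have hcoe : ((Real.toNNReal c * Cmax : NNReal) : ℝ) = c * (Cmax : ℝ) := by
        rw [NNReal.coe_mul, Real.coe_toNNReal c hc.le]
      rw [hcoe, mul_assoc]
      exact mul_le_mul_of_nonneg_left hg hc.le
    refine ⟨ν, hν1, ε, hεpos, Real.toNNReal c * Cmax, ψ, hψLip, ?_⟩
    intro x hx
    have hxb : ∀ i, B d e i x ∈ ball (B d e i p) (ε' i) := by
      intro i
      rw [mem_ball]
      calc dist (B d e i x) (B d e i p) ≤ dist x p := dist_B_le d e i x p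
        _ < ε := mem_ball.mp hx
        _ ≤ ε' i := Finset.inf'_le ε' (mem_univ i)
    have hmemSx : ∀ i ∈ S, (B d e i x ∈ Ωi i ↔ F i x < 0) := by
      intro i hi
      rw [hFdef]
      have := (hfr' i ((hmemS i).mp hi)).2 _ (hxb i)
      rw [this]
      exact sub_neg.symm
    have hmemNS : ∀ i, i ∉ S → B d e i x ∈ Ωi i := by
      intro i hi
      have : B d e i p ∈ Ωi i := not_not.mp (fun h => hi ((hmemS i).mpr h))
      exact hball' i this (hxb i)
    -- the key translation identity
    set u : ℝ := (inner ℝ x ν : ℝ) with hudef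
    have hkey : g (x - u • ν) = g x - u / c := by
      have hterm : ∀ i ∈ S, F i (x - u • ν) = F i x - u / c := by
        intro i hi
        have hB : B d e i (x - u • ν) = B d e i x - (u / c) • ν' i := by
          rw [B_sub_smul, hBν i hi, smul_smul]
          rw [div_eq_mul_inv]
        rw [hFdef]
        simp only
        rw [hB]
        exact hfun_sub (ν' i) (hnorm1 i hi) (ψ' i) (B d e i x) (u / c)
      rw [hgdef]
      simp only
      rw [Finset.sup'_congr ⟨i₀, hi₀⟩ rfl hterm]
      have hcomp := Finset.comp_sup'_eq_sup'_comp (f := fun i => F i x) ⟨i₀, hi₀⟩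
        (fun t : ℝ => t - u / c) (fun a b => (max_sub_sub_right a b (u / c)).symm)
      exact hcomp.symm
    -- final equivalence
    have hψval : ψ (x - u • ν) = -(c * g x) + u := by
      rw [hψdef]
      simp only
      rw [hkey]
      field_simp
      ring
    constructor
    · intro hxΩ
      rw [hΩ] at hxΩ
      have hgx : g x < 0 := by
        rw [hgdef]
        exact (Finset.sup'_lt_iff ⟨i₀, hi₀⟩).mpr (fun i hi => (hmemSx i hi).mp (hxΩ i))
      rw [hψval]
      nlinarith
    · intro hlt
      rw [hψval] at hlt
      have hgx : g x < 0 := by nlinarith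
      have hgx' : S.sup' ⟨i₀, hi₀⟩ (fun i => F i x) < 0 := by rw [hgdef] at hgx; exact hgx
      rw [hΩ]
      intro i
      by_cases hi : i ∈ S
      · exact (hmemSx i hi).mpr ((Finset.sup'_lt_iff ⟨i₀, hi₀⟩).mp hgx' i hi)
      · exact hmemNS i hi
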